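/- Let p be prime and K : ZMod p × ZMod p → ℂ. Suppose for every h ∈ (ZMod p)* and all F, G : ZMod p → ℂ, |∑_{u,v} F(u) G(v) K(u,v) conj(K(u−h,v+h))| ≤ B ‖F‖_{ℓ²} ‖G‖_{ℓ²}, and suppose |K(x,y)| ≤ C p^{−α}. Then for all f₁, f₂ : ZMod p → ℂ, ∑_s |∑_n f̂₁(s−n) f̂₂(n) K(s−n,n)|² ≤ (C² p^{−2α} + B) ‖f₁‖₂² ‖f₂‖₂², where f̂ is the normalized Fourier transform and ‖f‖₂ is the normalized L² norm. -/

import Mathlib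

open Finset

/-- `e_p(x) = exp(2πi x/p)` for `x ∈ ZMod p`. -/
noncomputable def ep (p : ℕ) (x : ZMod p) : ℂ :=
  Complex.exp (2 * Real.pi * Complex.I * ((x.val : ℂ) / (p : ℂ)))

/-- The normalized discrete Fourier transform `f̂(z) = p⁻¹ ∑ₓ f(x) e_p(−xz)`. -/
noncomputable def dft (p : ℕ) [Fact p.Prime] (f : ZMod p → ℂ) (z : ZMod p) : ℂ :=
  (p : ℂ)⁻¹ * ∑ x : ZMod p, f x * ep p (-(x * z))

section helpers

lemma abs_sq_eq_re (z : ℂ) : norm z ^ 2 = (z * star z).re := by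
  rw [show star z = (starRingEnd ℂ) z from rfl, Complex.mul_conj, Complex.sq_norm]
  simp

variable {p : ℕ} [Fact p.Prime]


lemma ep_eq_pow (x : ZMod p) : ep p x = Complex.exp (2 * Real.pi * Complex.I / p) ^ x.val := by
  rw [ep, ← Complex.exp_nat_mul]
  ring_nf

lemma ep_zero : ep p 0 = 1 := by
  simp [ep]

lemma ep_add (a b : ZMod p) : ep p (a + b) = ep p a * ep p b := by
  have hp : p ≠ 0 := (Fact.out : p.Prime).ne_zero
  have hζ : Complex.exp (2 * Real.pi * Complex.I / p) ^ p = 1 :=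
    (Complex.isPrimitiveRoot_exp p hp).pow_eq_one
  have : NeZero p := ⟨hp⟩
  rw [ep_eq_pow, ep_eq_pow, ep_eq_pow, ← pow_add, ZMod.val_add]
  conv_rhs => rw [← Nat.div_add_mod (a.val + b.val) p, pow_add, pow_mul, hζ, one_pow, one_mul]

lemma ep_star (a : ZMod p) : star (ep p a) = ep p (-a) := by
  have h1 : ep p a * ep p (-a) = 1 := by rw [← ep_add, add_neg_cancel, ep_zero]
  have habs : norm (ep p a) = 1 := by
    have e : (2 * Real.pi * Complex.I * ((a.val : ℂ)/(p:ℂ)))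
        = ((2*Real.pi*a.val/p : ℝ):ℂ) * Complex.I := by push_cast; ring
    rw [ep, e, Complex.norm_exp_ofReal_mul_I]
  have h2 : ep p a * star (ep p a) = 1 := by
    rw [show star (ep p a) = (starRingEnd ℂ) (ep p a) from rfl, Complex.mul_conj,
      Complex.normSq_eq_norm_sq, habs]
    norm_num
  rw [← inv_eq_of_mul_eq_one_right h2, inv_eq_of_mul_eq_one_right h1]

lemma sum_ep_eq_zero {a : ZMod p} (ha : a ≠ 0) : ∑ z : ZMod p, ep p (a * z) = 0 := by
  have hp : p ≠ 0 := (Fact.out : p.Prime).ne_zero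
  have hζ := Complex.isPrimitiveRoot_exp p hp
  have h1 : ∑ z : ZMod p, ep p (a * z) = ∑ w : ZMod p, ep p w :=
    Fintype.sum_equiv (Equiv.mulLeft₀ a ha) _ _ (fun z => rfl)
  have h2 : ∑ w : ZMod p, ep p w = ∑ i ∈ Finset.range p, Complex.exp (2 * Real.pi * Complex.I / p) ^ i := by
    simp_rw [ep_eq_pow]
    exact Finset.sum_nbij' (fun w => w.val) (fun i => (i : ZMod p))
      (fun w _ => Finset.mem_range.2 (ZMod.val_lt w)) (fun i _ => Finset.mem_univ _)
      (fun w _ => by simp [ZMod.natCast_val, ZMod.cast_id])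
      (fun i hi => ZMod.val_natCast_of_lt (Finset.mem_range.1 hi)) (fun _ _ => rfl)
  rw [h1, h2, hζ.geom_sum_eq_zero (Fact.out : p.Prime).one_lt]

lemma sum_ep (a : ZMod p) : ∑ z : ZMod p, ep p (a * z) = if a = 0 then (p : ℂ) else 0 := by
  split_ifs with h
  · simp [h, ep_zero]
  · exact sum_ep_eq_zero h



lemma dft_parseval (f : ZMod p → ℂ) :
    ∑ z : ZMod p, norm (dft p f z) ^ 2 = (p:ℝ)⁻¹ * ∑ x : ZMod p, norm (f x) ^ 2 := by
  have hp : (p:ℂ) ≠ 0 := Nat.cast_ne_zero.2 (Fact.out : p.Prime).ne_zero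
  have key : ∑ z : ZMod p, dft p f z * star (dft p f z)
      = (p:ℂ)⁻¹ * ∑ x : ZMod p, f x * star (f x) := by
    have step1 : ∀ z : ZMod p, dft p f z * star (dft p f z)
        = (p:ℂ)⁻¹ * (p:ℂ)⁻¹ * ∑ x : ZMod p, ∑ y : ZMod p,
            f x * star (f y) * ep p ((y - x) * z) := by
      intro z
      rw [dft, star_mul', star_inv₀, star_natCast, star_sum]
      have hst : ∀ y : ZMod p, star (f y * ep p (-(y * z))) = star (f y) * ep p (y * z) := by
        intro y; rw [star_mul', ep_star, neg_neg, mul_comm]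
      simp_rw [hst]
      rw [show ((p:ℂ)⁻¹ * ∑ x : ZMod p, f x * ep p (-(x * z))) *
          ((p:ℂ)⁻¹ * ∑ y : ZMod p, star (f y) * ep p (y * z))
          = (p:ℂ)⁻¹ * (p:ℂ)⁻¹ * ((∑ x : ZMod p, f x * ep p (-(x * z))) *
            (∑ y : ZMod p, star (f y) * ep p (y * z))) by ring]
      rw [Finset.sum_mul_sum]
      congr 1
      refine Finset.sum_congr rfl fun x _ => Finset.sum_congr rfl fun y _ => ?_
      rw [show f x * ep p (-(x * z)) * (star (f y) * ep p (y * z))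
          = f x * star (f y) * (ep p (-(x * z)) * ep p (y * z)) by ring, ← ep_add]
      congr 2
      ring
    simp_rw [step1, ← Finset.mul_sum]
    have inner : ∑ z : ZMod p, ∑ x : ZMod p, ∑ y : ZMod p, f x * star (f y) * ep p ((y - x) * z)
        = (p:ℂ) * ∑ x : ZMod p, f x * star (f x) := by
      rw [Finset.sum_comm, Finset.mul_sum]
      refine Finset.sum_congr rfl fun x _ => ?_
      rw [Finset.sum_comm]
      have h3 : ∀ y : ZMod p, ∑ z : ZMod p, f x * star (f y) * ep p ((y - x) * z)
          = f x * star (f y) * if y - x = 0 then (p:ℂ) else 0 := by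
        intro y; rw [← Finset.mul_sum, sum_ep]
      simp_rw [h3, sub_eq_zero, mul_ite, mul_zero]
      rw [Finset.sum_ite_eq' Finset.univ x (fun y => f x * star (f y) * (p:ℂ))]
      simp [mul_comm, mul_left_comm, mul_assoc]
    rw [inner]
    field_simp
  have lhs : ∑ z : ZMod p, norm (dft p f z) ^ 2
      = (∑ z : ZMod p, dft p f z * star (dft p f z)).re := by
    rw [Complex.re_sum]; exact Finset.sum_congr rfl fun z _ => abs_sq_eq_re _
  rw [lhs, key]
  rw [show ((p:ℂ)⁻¹ : ℂ) = ((p:ℝ)⁻¹ : ℝ) by push_cast; ring]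
  rw [Complex.re_ofReal_mul, Complex.re_sum]
  congr 1
  exact Finset.sum_congr rfl fun x _ => (abs_sq_eq_re _).symm



/-- Kernel-sum helpers. -/
noncomputable def Tk (p : ℕ) [Fact p.Prime] (K : ZMod p → ZMod p → ℂ)
    (f₁ f₂ : ZMod p → ℂ) (s n : ZMod p) : ℂ :=
  dft p f₁ (s - n) * dft p f₂ n * K (s - n) n

noncomputable def Zk (p : ℕ) [Fact p.Prime] (K : ZMod p → ZMod p → ℂ)
    (f₁ f₂ : ZMod p → ℂ) (h : ZMod p) : ℂ :=
  ∑ u : ZMod p, ∑ v : ZMod p,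
    (dft p f₁ u * star (dft p f₁ (u - h))) * (dft p f₂ v * star (dft p f₂ (v + h)))
      * K u v * star (K (u - h) (v + h))

def shiftEquiv3 (p : ℕ) : (ZMod p × ZMod p × ZMod p) ≃ (ZMod p × ZMod p × ZMod p) where
  toFun x := (x.2.1 + x.2.2, x.2.2, x.2.2 + x.1)
  invFun y := (y.2.2 - y.2.1, y.1 - y.2.1, y.2.1)
  left_inv x := by
    obtain ⟨h, u, v⟩ := x
    simp only [Prod.mk.injEq]
    refine ⟨by ring, by ring, trivial⟩
  right_inv y := by
    obtain ⟨s, n₁, n₂⟩ := y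
    simp only [Prod.mk.injEq]
    refine ⟨by ring, trivial, by ring⟩

lemma expand_TT (K : ZMod p → ZMod p → ℂ) (f₁ f₂ : ZMod p → ℂ) :
    ∑ s : ZMod p, norm (∑ n : ZMod p, Tk p K f₁ f₂ s n) ^ 2
      = (∑ h : ZMod p, Zk p K f₁ f₂ h).re := by
  have e1 : ∀ (g : ZMod p → ZMod p → ZMod p → ℂ),
      ∑ x : ZMod p × ZMod p × ZMod p, g x.1 x.2.1 x.2.2
        = ∑ s : ZMod p, ∑ n₁ : ZMod p, ∑ n₂ : ZMod p, g s n₁ n₂ := by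
    intro g
    rw [Fintype.sum_prod_type]
    exact Finset.sum_congr rfl fun s _ => Fintype.sum_prod_type _
  have habs : ∀ s : ZMod p, norm (∑ n : ZMod p, Tk p K f₁ f₂ s n) ^ 2
      = ((∑ n : ZMod p, Tk p K f₁ f₂ s n) * star (∑ n : ZMod p, Tk p K f₁ f₂ s n)).re :=
    fun s => abs_sq_eq_re _
  simp_rw [habs]
  rw [← Complex.re_sum]
  congr 1
  have hsum : ∀ s : ZMod p, (∑ n : ZMod p, Tk p K f₁ f₂ s n) * star (∑ n : ZMod p, Tk p K f₁ f₂ s n)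
      = ∑ n₁ : ZMod p, ∑ n₂ : ZMod p, Tk p K f₁ f₂ s n₁ * star (Tk p K f₁ f₂ s n₂) := by
    intro s; rw [star_sum, Finset.sum_mul_sum]
  simp_rw [hsum]
  rw [← e1 (fun s n₁ n₂ => Tk p K f₁ f₂ s n₁ * star (Tk p K f₁ f₂ s n₂))]
  have hZ : ∑ h : ZMod p, Zk p K f₁ f₂ h
      = ∑ x : ZMod p × ZMod p × ZMod p,
          (dft p f₁ x.2.1 * star (dft p f₁ (x.2.1 - x.1)))
            * (dft p f₂ x.2.2 * star (dft p f₂ (x.2.2 + x.1)))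
            * K x.2.1 x.2.2 * star (K (x.2.1 - x.1) (x.2.2 + x.1)) :=
    (e1 (fun h u v => (dft p f₁ u * star (dft p f₁ (u - h)))
      * (dft p f₂ v * star (dft p f₂ (v + h))) * K u v * star (K (u - h) (v + h)))).symm
  rw [hZ]
  refine (Fintype.sum_equiv (shiftEquiv3 p) _ _ ?_).symm
  rintro ⟨h, u, v⟩
  simp only [shiftEquiv3, Equiv.coe_fn_mk, Tk]
  rw [show u + v - v = u from add_sub_cancel_right u v,
    show u + v - (v + h) = u - h from by ring]
  simp only [star_mul']
  ring

lemma CS_step (a b : ZMod p → ℝ) (ha : ∀ u, 0 ≤ a u) (hb : ∀ v, 0 ≤ b v) :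
    ∑ h : ZMod p, Real.sqrt (∑ u : ZMod p, a u * a (u - h))
        * Real.sqrt (∑ v : ZMod p, b v * b (v + h))
      ≤ (∑ u : ZMod p, a u) * (∑ v : ZMod p, b v) := by
  have hPa : ∀ h : ZMod p, 0 ≤ ∑ u : ZMod p, a u * a (u - h) :=
    fun h => Finset.sum_nonneg fun u _ => mul_nonneg (ha u) (ha _)
  have hPb : ∀ h : ZMod p, 0 ≤ ∑ v : ZMod p, b v * b (v + h) :=
    fun h => Finset.sum_nonneg fun v _ => mul_nonneg (hb v) (hb _)
  have h1 := Finset.sum_mul_sq_le_sq_mul_sq Finset.univ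
    (fun h : ZMod p => Real.sqrt (∑ u : ZMod p, a u * a (u - h)))
    (fun h : ZMod p => Real.sqrt (∑ v : ZMod p, b v * b (v + h)))
  simp only [Real.sq_sqrt (hPa _), Real.sq_sqrt (hPb _)] at h1
  have hPaSum : ∑ h : ZMod p, ∑ u : ZMod p, a u * a (u - h) = (∑ u : ZMod p, a u) ^ 2 := by
    rw [Finset.sum_comm]
    have key : ∀ u : ZMod p, ∑ h : ZMod p, a u * a (u - h) = a u * ∑ w : ZMod p, a w := by
      intro u
      rw [← Finset.mul_sum]
      congr 1
      exact Fintype.sum_equiv (Equiv.subLeft u) _ _ fun h => rfl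
    simp_rw [key, ← Finset.sum_mul]
    rw [sq]
  have hPbSum : ∑ h : ZMod p, ∑ v : ZMod p, b v * b (v + h) = (∑ v : ZMod p, b v) ^ 2 := by
    rw [Finset.sum_comm]
    have key : ∀ v : ZMod p, ∑ h : ZMod p, b v * b (v + h) = b v * ∑ w : ZMod p, b w := by
      intro v
      rw [← Finset.mul_sum]
      congr 1
      exact Fintype.sum_equiv (Equiv.addLeft v) _ _ fun h => rfl
    simp_rw [key, ← Finset.sum_mul]
    rw [sq]
  rw [hPaSum, hPbSum, ← mul_pow] at h1
  have hS : 0 ≤ ∑ h : ZMod p, Real.sqrt (∑ u : ZMod p, a u * a (u - h))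
      * Real.sqrt (∑ v : ZMod p, b v * b (v + h)) :=
    Finset.sum_nonneg fun h _ => mul_nonneg (Real.sqrt_nonneg _) (Real.sqrt_nonneg _)
  have hT : 0 ≤ (∑ u : ZMod p, a u) * (∑ v : ZMod p, b v) :=
    mul_nonneg (Finset.sum_nonneg fun u _ => ha u) (Finset.sum_nonneg fun v _ => hb v)
  calc ∑ h : ZMod p, Real.sqrt (∑ u : ZMod p, a u * a (u - h))
        * Real.sqrt (∑ v : ZMod p, b v * b (v + h))
      = Real.sqrt ((∑ h : ZMod p, Real.sqrt (∑ u : ZMod p, a u * a (u - h))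
          * Real.sqrt (∑ v : ZMod p, b v * b (v + h))) ^ 2) := (Real.sqrt_sq hS).symm
    _ ≤ Real.sqrt (((∑ u : ZMod p, a u) * (∑ v : ZMod p, b v)) ^ 2) := Real.sqrt_le_sqrt h1
    _ = (∑ u : ZMod p, a u) * (∑ v : ZMod p, b v) := Real.sqrt_sq hT

end helpers

/-- TT* reduction: if the bilinear forms associated to `K` are bounded by `B` for every
`h ≠ 0`, and `|K| ≤ C p^{−α}`, then
`∑_s |∑_n f̂₁(s−n) f̂₂(n) K(s−n,n)|² ≤ (C² p^{−2α} + B) ‖f₁‖₂² ‖f₂‖₂²`. -/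
theorem TTstar_reduction (p : ℕ) [Fact p.Prime] (K : ZMod p → ZMod p → ℂ) (B C α : ℝ)
    (hbil : ∀ h : ZMod p, h ≠ 0 → ∀ F G : ZMod p → ℂ,
      norm (∑ u : ZMod p, ∑ v : ZMod p,
          F u * G v * K u v * star (K (u - h) (v + h)))
        ≤ B * (∑ u : ZMod p, norm (F u) ^ 2) ^ ((1 : ℝ)/2) *
            (∑ v : ZMod p, norm (G v) ^ 2) ^ ((1 : ℝ)/2))
    (hK : ∀ x y : ZMod p, norm (K x y) ≤ C * (p : ℝ) ^ (-α)) :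
    ∀ f₁ f₂ : ZMod p → ℂ,
      ∑ s : ZMod p,
          norm (∑ n : ZMod p, dft p f₁ (s - n) * dft p f₂ n * K (s - n) n) ^ 2
        ≤ (C ^ 2 * (p : ℝ) ^ (-(2 * α)) + B) *
            ((p : ℝ)⁻¹ * ∑ x : ZMod p, norm (f₁ x) ^ 2) *
            ((p : ℝ)⁻¹ * ∑ x : ZMod p, norm (f₂ x) ^ 2) := by
  intro f₁ f₂
  -- abbreviations (as plain expressions)
  set M : ℝ := C ^ 2 * (p : ℝ) ^ (-(2 * α)) with hM
  have hB : 0 ≤ B := by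
    have hb := hbil 1 one_ne_zero (fun u => if u = 0 then (1:ℂ) else 0)
      (fun v => if v = 0 then (1:ℂ) else 0)
    have hsum1 : ∑ u : ZMod p, norm (if u = 0 then (1:ℂ) else 0) ^ 2 = 1 := by
      simp [apply_ite norm]
    simp only [] at hb
    rw [hsum1, Real.one_rpow, mul_one, mul_one] at hb
    exact le_trans (norm_nonneg _) hb
  have hMnn : 0 ≤ M := by
    have h0 := le_trans (norm_nonneg (K 0 0)) (hK 0 0)
    have : (0:ℝ) ≤ (C * (p : ℝ) ^ (-α)) ^ 2 := sq_nonneg _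
    rwa [mul_pow, ← Real.rpow_natCast ((p:ℝ) ^ (-α)) 2, ← Real.rpow_mul (Nat.cast_nonneg p),
      show -α * (2:ℕ) = -(2*α) by push_cast; ring, ← hM] at this
  have hK2 : ∀ x y : ZMod p, norm (K x y) ^ 2 ≤ M := by
    intro x y
    have := pow_le_pow_left₀ (norm_nonneg _) (hK x y) 2
    rwa [mul_pow, ← Real.rpow_natCast ((p:ℝ) ^ (-α)) 2, ← Real.rpow_mul (Nat.cast_nonneg p),
      show -α * (2:ℕ) = -(2*α) by push_cast; ring, ← hM] at this
  -- the goal in terms of Tk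
  have goal_eq : (∑ s : ZMod p,
      norm (∑ n : ZMod p, dft p f₁ (s - n) * dft p f₂ n * K (s - n) n) ^ 2)
      = ∑ s : ZMod p, norm (∑ n : ZMod p, Tk p K f₁ f₂ s n) ^ 2 := rfl
  rw [goal_eq, expand_TT, ← dft_parseval f₁, ← dft_parseval f₂]
  set Sa : ℝ := ∑ z : ZMod p, norm (dft p f₁ z) ^ 2 with hSa
  set Sb : ℝ := ∑ z : ZMod p, norm (dft p f₂ z) ^ 2 with hSb
  have hSann : 0 ≤ Sa := Finset.sum_nonneg fun z _ => sq_nonneg _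
  have hSbnn : 0 ≤ Sb := Finset.sum_nonneg fun z _ => sq_nonneg _
  -- bound for h = 0
  have hZ0 : (Zk p K f₁ f₂ 0).re ≤ M * (Sa * Sb) := by
    have hterm : ∀ u v : ZMod p,
        (dft p f₁ u * star (dft p f₁ u)) * (dft p f₂ v * star (dft p f₂ v))
          * K u v * star (K u v)
        = ((norm (dft p f₁ u) ^ 2 * norm (dft p f₂ v) ^ 2
            * norm (K u v) ^ 2 : ℝ) : ℂ) := by
      intro u v
      rw [mul_assoc]
      simp only [Complex.star_def, Complex.mul_conj, Complex.normSq_eq_norm_sq]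
      push_cast
      ring
    have hre : (Zk p K f₁ f₂ 0).re
        = ∑ u : ZMod p, ∑ v : ZMod p, norm (dft p f₁ u) ^ 2
            * norm (dft p f₂ v) ^ 2 * norm (K u v) ^ 2 := by
      simp only [Zk, sub_zero, add_zero]
      simp_rw [hterm, ← Complex.ofReal_sum]
      exact Complex.ofReal_re _
    rw [hre]
    have step : ∑ u : ZMod p, ∑ v : ZMod p, norm (dft p f₁ u) ^ 2
          * norm (dft p f₂ v) ^ 2 * norm (K u v) ^ 2
        ≤ ∑ u : ZMod p, ∑ v : ZMod p, norm (dft p f₁ u) ^ 2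
          * norm (dft p f₂ v) ^ 2 * M :=
      Finset.sum_le_sum fun u _ => Finset.sum_le_sum fun v _ =>
        mul_le_mul_of_nonneg_left (hK2 u v) (mul_nonneg (sq_nonneg _) (sq_nonneg _))
    refine le_trans step (le_of_eq ?_)
    rw [show M * (Sa * Sb) = Sa * Sb * M by ring, hSa, hSb, Finset.sum_mul_sum, Finset.sum_mul]
    exact Finset.sum_congr rfl fun u _ => (Finset.sum_mul _ _ _).symm
  -- bound for h ≠ 0
  have hZh : ∀ h : ZMod p, h ≠ 0 → norm (Zk p K f₁ f₂ h)
      ≤ B * (Real.sqrt (∑ u : ZMod p, norm (dft p f₁ u) ^ 2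
              * norm (dft p f₁ (u - h)) ^ 2)
          * Real.sqrt (∑ v : ZMod p, norm (dft p f₂ v) ^ 2
              * norm (dft p f₂ (v + h)) ^ 2)) := by
    intro h hne
    have hb := hbil h hne (fun u => dft p f₁ u * star (dft p f₁ (u - h)))
      (fun v => dft p f₂ v * star (dft p f₂ (v + h)))
    have habsF : ∀ u : ZMod p, norm (dft p f₁ u * star (dft p f₁ (u - h))) ^ 2
        = norm (dft p f₁ u) ^ 2 * norm (dft p f₁ (u - h)) ^ 2 := by
      intro u; rw [norm_mul, Complex.star_def, Complex.norm_conj, mul_pow]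
    have habsG : ∀ v : ZMod p, norm (dft p f₂ v * star (dft p f₂ (v + h))) ^ 2
        = norm (dft p f₂ v) ^ 2 * norm (dft p f₂ (v + h)) ^ 2 := by
      intro v; rw [norm_mul, Complex.star_def, Complex.norm_conj, mul_pow]
    simp_rw [habsF, habsG] at hb
    have hra : (∑ u : ZMod p, norm (dft p f₁ u) ^ 2
        * norm (dft p f₁ (u - h)) ^ 2) ^ ((1:ℝ)/2)
        = Real.sqrt (∑ u : ZMod p, norm (dft p f₁ u) ^ 2
            * norm (dft p f₁ (u - h)) ^ 2) := by
      rw [Real.sqrt_eq_rpow]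
    have hrb : (∑ v : ZMod p, norm (dft p f₂ v) ^ 2
        * norm (dft p f₂ (v + h)) ^ 2) ^ ((1:ℝ)/2)
        = Real.sqrt (∑ v : ZMod p, norm (dft p f₂ v) ^ 2
            * norm (dft p f₂ (v + h)) ^ 2) := by
      rw [Real.sqrt_eq_rpow]
    rw [hra, hrb, mul_assoc] at hb
    exact hb
  -- sum over h ≠ 0
  have hsum_h : ∑ h ∈ Finset.univ.erase (0 : ZMod p), norm (Zk p K f₁ f₂ h)
      ≤ B * (Sa * Sb) := by
    calc ∑ h ∈ Finset.univ.erase (0 : ZMod p), norm (Zk p K f₁ f₂ h)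
        ≤ ∑ h ∈ Finset.univ.erase (0 : ZMod p),
            B * (Real.sqrt (∑ u : ZMod p, norm (dft p f₁ u) ^ 2
                  * norm (dft p f₁ (u - h)) ^ 2)
              * Real.sqrt (∑ v : ZMod p, norm (dft p f₂ v) ^ 2
                  * norm (dft p f₂ (v + h)) ^ 2)) :=
          Finset.sum_le_sum fun h hh => hZh h (Finset.mem_erase.1 hh).1
      _ ≤ ∑ h : ZMod p,
            B * (Real.sqrt (∑ u : ZMod p, norm (dft p f₁ u) ^ 2
                  * norm (dft p f₁ (u - h)) ^ 2)
              * Real.sqrt (∑ v : ZMod p, norm (dft p f₂ v) ^ 2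
                  * norm (dft p f₂ (v + h)) ^ 2)) :=
          Finset.sum_le_sum_of_subset_of_nonneg (Finset.subset_univ _)
            (fun h _ _ => mul_nonneg hB
              (mul_nonneg (Real.sqrt_nonneg _) (Real.sqrt_nonneg _)))
      _ = B * ∑ h : ZMod p,
            Real.sqrt (∑ u : ZMod p, norm (dft p f₁ u) ^ 2
                  * norm (dft p f₁ (u - h)) ^ 2)
              * Real.sqrt (∑ v : ZMod p, norm (dft p f₂ v) ^ 2
                  * norm (dft p f₂ (v + h)) ^ 2) := by
          rw [Finset.mul_sum]
      _ ≤ B * (Sa * Sb) := by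
          refine mul_le_mul_of_nonneg_left ?_ hB
          exact CS_step (fun u => norm (dft p f₁ u) ^ 2)
            (fun v => norm (dft p f₂ v) ^ 2)
            (fun u => sq_nonneg _) (fun v => sq_nonneg _)
  -- assemble
  rw [← Finset.sum_erase_add Finset.univ _ (Finset.mem_univ (0 : ZMod p)), Complex.add_re]
  have h2 : (∑ h ∈ Finset.univ.erase (0 : ZMod p), Zk p K f₁ f₂ h).re ≤ B * (Sa * Sb) :=
    le_trans (Complex.re_le_norm _) (le_trans (norm_sum_le _ _) hsum_h)
  calc (∑ h ∈ Finset.univ.erase (0 : ZMod p), Zk p K f₁ f₂ h).re + (Zk p K f₁ f₂ 0).re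
      ≤ B * (Sa * Sb) + M * (Sa * Sb) := add_le_add h2 hZ0
    _ = (M + B) * Sa * Sb := by ring
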